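/- If E = (C, V) is a balanced group-separable election with |C| = 2^k candidates compatible with a binary tree T whose leaves in left-to-right order are c_1,...,c_{2^k}, then its position matrix X (columns ordered c_1,...,c_{2^k}) is evenly-quartered: the sum of entries of its upper-left quarter equals the sum of entries of its bottom-right quarter, and the sum of entries of its upper-right quarter equals the sum of entries of its bottom-left quarter. -/

import Mathlib

/-- A vote (bijection from positions to candidates, both `Fin (2^k)`) is compatible
with the complete binary tree whose leaves in order are the candidates iff for every
level `j` each aligned dyadic block of positions of size `2^j` is mapped onto an
aligned dyadic block of candidates of size `2^j`. -/
def BalancedCompatible (k : ℕ) (σ : Equiv.Perm (Fin (2 ^ k))) : Prop :=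
  ∀ j ≤ k, ∀ t : ℕ, t < 2 ^ (k - j) →
    ∃ s : ℕ, s < 2 ^ (k - j) ∧ ∀ p : Fin (2 ^ k),
      (t * 2 ^ j ≤ (p : ℕ) ∧ (p : ℕ) < (t + 1) * 2 ^ j) →
      (s * 2 ^ j ≤ ((σ p : Fin (2 ^ k)) : ℕ) ∧ ((σ p : Fin (2 ^ k)) : ℕ) < (s + 1) * 2 ^ j)



/-- Per-vote dichotomy: a compatible vote either preserves the two halves or swaps them. -/
lemma half_dichotomy (k : ℕ) (hk : 1 ≤ k) (v : Equiv.Perm (Fin (2 ^ k)))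
    (hv : ∀ j ≤ k, ∀ t : ℕ, t < 2 ^ (k - j) →
      ∃ s : ℕ, s < 2 ^ (k - j) ∧ ∀ p : Fin (2 ^ k),
        (t * 2 ^ j ≤ (p : ℕ) ∧ (p : ℕ) < (t + 1) * 2 ^ j) →
        (s * 2 ^ j ≤ ((v p : Fin (2 ^ k)) : ℕ) ∧ ((v p : Fin (2 ^ k)) : ℕ) < (s + 1) * 2 ^ j)) :
    ((∀ p : Fin (2 ^ k), (p : ℕ) < 2 ^ (k - 1) → (v p : ℕ) < 2 ^ (k - 1)) ∧
     (∀ p : Fin (2 ^ k), 2 ^ (k - 1) ≤ (p : ℕ) → 2 ^ (k - 1) ≤ (v p : ℕ))) ∨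
    ((∀ p : Fin (2 ^ k), (p : ℕ) < 2 ^ (k - 1) → 2 ^ (k - 1) ≤ (v p : ℕ)) ∧
     (∀ p : Fin (2 ^ k), 2 ^ (k - 1) ≤ (p : ℕ) → (v p : ℕ) < 2 ^ (k - 1))) := by
  set m := 2 ^ (k - 1) with hm
  have hone : k - (k - 1) = 1 := Nat.sub_sub_self hk
  have h2 : (2 : ℕ) ^ (k - (k - 1)) = 2 := by rw [hone]; norm_num
  have hmpos : 0 < m := Nat.pow_pos (by norm_num)
  have h2m : 2 * m = 2 ^ k := by
    rw [hm, ← pow_succ']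
    congr 1
    omega
  obtain ⟨s0, hs0lt, hs0⟩ := hv (k - 1) (Nat.sub_le k 1) 0 (by rw [h2]; norm_num)
  obtain ⟨s1, hs1lt, hs1⟩ := hv (k - 1) (Nat.sub_le k 1) 1 (by rw [h2]; norm_num)
  rw [h2] at hs0lt hs1lt
  have hb0 : ∀ p : Fin (2 ^ k), (p : ℕ) < m → s0 * m ≤ (v p : ℕ) ∧ (v p : ℕ) < (s0 + 1) * m := by
    intro p hp
    exact hs0 p ⟨by simp, by simpa using hp⟩
  have hb1 : ∀ p : Fin (2 ^ k), m ≤ (p : ℕ) → s1 * m ≤ (v p : ℕ) ∧ (v p : ℕ) < (s1 + 1) * m := by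
    intro p hp
    refine hs1 p ⟨by simpa using hp, ?_⟩
    have := p.isLt
    omega
  have hne : s0 ≠ s1 := by
    intro heq
    subst heq
    have h0lt : (0 : ℕ) < 2 ^ k := Nat.pow_pos (by norm_num)
    have hmlt : m < 2 ^ k := by omega
    set p0 := v.symm ⟨0, h0lt⟩ with hp0
    set pm := v.symm ⟨m, hmlt⟩ with hpm
    have hv0 : (v p0 : ℕ) = 0 := by rw [hp0]; simp
    have hvm : (v pm : ℕ) = m := by rw [hpm]; simp
    have hs0z : s0 = 0 := by
      rcases lt_or_ge ((p0 : ℕ)) m with h | h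
      · have := (hb0 p0 h).1; rw [hv0] at this; nlinarith
      · have := (hb1 p0 h).1; rw [hv0] at this; nlinarith
    rcases lt_or_ge ((pm : ℕ)) m with h | h
    · have := (hb0 pm h).2; rw [hvm, hs0z] at this; omega
    · have := (hb1 pm h).2; rw [hvm, hs0z] at this; omega
  have hs0' : s0 = 0 ∨ s0 = 1 := by omega
  have hs1' : s1 = 0 ∨ s1 = 1 := by omega
  rcases hs0' with h0 | h0 <;> rcases hs1' with h1 | h1 <;> subst h0 <;> subst h1
  · exact absurd rfl hne
  · left
    constructor
    · intro p hp; have := hb0 p hp; omega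
    · intro p hp; have := hb1 p hp; omega
  · right
    constructor
    · intro p hp; have := hb0 p hp; omega
    · intro p hp; have := hb1 p hp; omega
  · exact absurd rfl hne

lemma card_filter_lt_fin (n m : ℕ) (h : m ≤ n) :
    (Finset.univ.filter (fun i : Fin n => (i : ℕ) < m)).card = m := by
  have : (Finset.univ.filter (fun i : Fin n => (i : ℕ) < m)).card = (Finset.range m).card := by
    refine Finset.card_bij (fun i _ => (i : ℕ)) ?_ ?_ ?_
    · intro a ha
      simp only [Finset.mem_filter] at ha
      simpa using ha.2
    · intro a ha b hb hab
      exact Fin.ext hab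
    · intro b hb
      simp only [Finset.mem_range] at hb
      exact ⟨⟨b, lt_of_lt_of_le hb h⟩, by simp [hb], rfl⟩
  simpa using this

lemma card_filter_le_fin (n m : ℕ) (h : m ≤ n) :
    (Finset.univ.filter (fun i : Fin n => m ≤ (i : ℕ))).card = n - m := by
  have h1 := Finset.card_filter_add_card_filter_not
    (s := (Finset.univ : Finset (Fin n))) (p := fun i : Fin n => (i : ℕ) < m)
  simp only [not_lt] at h1
  have h2 := card_filter_lt_fin n m h
  simp only [Finset.card_univ, Fintype.card_fin] at h1
  omega

lemma multiset_sum_swap {α ι : Type*} (s : Multiset α) (t : Finset ι) (f : α → ι → ℕ) :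
    ∑ i ∈ t, (s.map (fun a => f a i)).sum = (s.map (fun a => ∑ i ∈ t, f a i)).sum := by
  induction s using Multiset.induction with
  | empty => simp
  | cons a s ih => simp [Finset.sum_add_distrib, ih]

lemma filter_card_eq_map_sum {α : Type*} (s : Multiset α) (p : α → Prop) [DecidablePred p] :
    (s.filter p).card = (s.map (fun a => if p a then 1 else 0)).sum := by
  induction s using Multiset.induction with
  | empty => simp
  | cons a s ih =>
    by_cases h : p a <;> simp [h, ih, Nat.add_comm]

/-- the position matrix of a balanced group-separable election on
`2^k` candidates is evenly-quartered: the entry sum of the upper-left quarter equals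
that of the bottom-right quarter, and the entry sum of the upper-right quarter equals
that of the bottom-left quarter. -/
theorem balanced_gs_evenly_quartered (k : ℕ) (hk : 1 ≤ k)
    (votes : Multiset (Equiv.Perm (Fin (2 ^ k))))
    (hcomp : ∀ v ∈ votes, BalancedCompatible k v)
    (X : Fin (2 ^ k) → Fin (2 ^ k) → ℕ)
    (hX : ∀ i j, X i j = (votes.filter (fun v => v i = j)).card) :
    ((∑ i ∈ Finset.univ.filter (fun i : Fin (2 ^ k) => (i : ℕ) < 2 ^ (k - 1)),
        ∑ j ∈ Finset.univ.filter (fun j : Fin (2 ^ k) => (j : ℕ) < 2 ^ (k - 1)), X i j)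
      = ∑ i ∈ Finset.univ.filter (fun i : Fin (2 ^ k) => 2 ^ (k - 1) ≤ (i : ℕ)),
          ∑ j ∈ Finset.univ.filter (fun j : Fin (2 ^ k) => 2 ^ (k - 1) ≤ (j : ℕ)), X i j) ∧
    ((∑ i ∈ Finset.univ.filter (fun i : Fin (2 ^ k) => (i : ℕ) < 2 ^ (k - 1)),
        ∑ j ∈ Finset.univ.filter (fun j : Fin (2 ^ k) => 2 ^ (k - 1) ≤ (j : ℕ)), X i j)
      = ∑ i ∈ Finset.univ.filter (fun i : Fin (2 ^ k) => 2 ^ (k - 1) ≤ (i : ℕ)),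
          ∑ j ∈ Finset.univ.filter (fun j : Fin (2 ^ k) => (j : ℕ) < 2 ^ (k - 1)), X i j) := by
  set m := 2 ^ (k - 1) with hm
  have hmle : m ≤ 2 ^ k := Nat.pow_le_pow_right (by norm_num) (Nat.sub_le k 1)
  have h2m : 2 ^ k - m = m := by
    have : 2 * m = 2 ^ k := by
      rw [hm, ← pow_succ']
      congr 1
      omega
    omega
  have key : ∀ (P Q : Fin (2 ^ k) → Prop) [DecidablePred P] [DecidablePred Q],
      (∑ i ∈ Finset.univ.filter (fun i : Fin (2 ^ k) => P i),
        ∑ j ∈ Finset.univ.filter (fun j : Fin (2 ^ k) => Q j), X i j)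
      = (votes.map (fun v =>
          ((Finset.univ.filter (fun i : Fin (2 ^ k) => P i)).filter
            (fun i => Q (v i))).card)).sum := by
    intro P Q _ _
    have step1 : ∀ i j, X i j = (votes.map (fun v => if v i = j then 1 else 0)).sum := by
      intro i j
      rw [hX i j, filter_card_eq_map_sum]
    calc (∑ i ∈ Finset.univ.filter (fun i : Fin (2 ^ k) => P i),
            ∑ j ∈ Finset.univ.filter (fun j : Fin (2 ^ k) => Q j), X i j)
        = ∑ i ∈ Finset.univ.filter (fun i : Fin (2 ^ k) => P i),
            (votes.map (fun v => ∑ j ∈ Finset.univ.filter (fun j : Fin (2 ^ k) => Q j),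
              if v i = j then 1 else 0)).sum := by
          refine Finset.sum_congr rfl fun i _ => ?_
          rw [← multiset_sum_swap]
          exact Finset.sum_congr rfl fun j _ => step1 i j
      _ = (votes.map (fun v => ∑ i ∈ Finset.univ.filter (fun i : Fin (2 ^ k) => P i),
            ∑ j ∈ Finset.univ.filter (fun j : Fin (2 ^ k) => Q j),
              if v i = j then 1 else 0)).sum := multiset_sum_swap _ _ _
      _ = _ := by
          congr 1
          apply Multiset.map_congr rfl
          intro v _
          rw [Finset.card_filter]
          refine Finset.sum_congr rfl fun i _ => ?_
          have e1 : (∑ j ∈ Finset.univ.filter (fun j : Fin (2 ^ k) => Q j),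
              if v i = j then 1 else 0)
              = ∑ j ∈ Finset.univ.filter (fun j : Fin (2 ^ k) => Q j),
              if j = v i then (1 : ℕ) else 0 :=
            Finset.sum_congr rfl fun j _ => by simp [eq_comm]
          rw [e1, Finset.sum_ite_eq' (Finset.univ.filter (fun j : Fin (2 ^ k) => Q j)) (v i)
            (fun _ => (1 : ℕ))]
          simp
  constructor
  · rw [key (fun i => (i : ℕ) < m) (fun j => (j : ℕ) < m),
      key (fun i => m ≤ (i : ℕ)) (fun j => m ≤ (j : ℕ))]
    congr 1
    apply Multiset.map_congr rfl
    intro v hv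
    rcases half_dichotomy k hk v (hcomp v hv) with ⟨h1, h2⟩ | ⟨h1, h2⟩
    · have eL : (Finset.univ.filter (fun i : Fin (2 ^ k) => (i : ℕ) < m)).filter
          (fun i => ((v i : Fin (2 ^ k)) : ℕ) < m)
          = Finset.univ.filter (fun i : Fin (2 ^ k) => (i : ℕ) < m) :=
        Finset.filter_true_of_mem fun i hi => h1 i (Finset.mem_filter.mp hi).2
      have eR : (Finset.univ.filter (fun i : Fin (2 ^ k) => m ≤ (i : ℕ))).filter
          (fun i => m ≤ ((v i : Fin (2 ^ k)) : ℕ))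
          = Finset.univ.filter (fun i : Fin (2 ^ k) => m ≤ (i : ℕ)) :=
        Finset.filter_true_of_mem fun i hi => h2 i (Finset.mem_filter.mp hi).2
      rw [eL, eR, card_filter_lt_fin _ _ hmle, card_filter_le_fin _ _ hmle, h2m]
    · have eL : (Finset.univ.filter (fun i : Fin (2 ^ k) => (i : ℕ) < m)).filter
          (fun i => ((v i : Fin (2 ^ k)) : ℕ) < m) = ∅ :=
        Finset.filter_false_of_mem fun i hi =>
          not_lt.mpr (h1 i (Finset.mem_filter.mp hi).2)
      have eR : (Finset.univ.filter (fun i : Fin (2 ^ k) => m ≤ (i : ℕ))).filter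
          (fun i => m ≤ ((v i : Fin (2 ^ k)) : ℕ)) = ∅ :=
        Finset.filter_false_of_mem fun i hi =>
          not_le.mpr (h2 i (Finset.mem_filter.mp hi).2)
      rw [eL, eR]
  · rw [key (fun i => (i : ℕ) < m) (fun j => m ≤ (j : ℕ)),
      key (fun i => m ≤ (i : ℕ)) (fun j => (j : ℕ) < m)]
    congr 1
    apply Multiset.map_congr rfl
    intro v hv
    rcases half_dichotomy k hk v (hcomp v hv) with ⟨h1, h2⟩ | ⟨h1, h2⟩
    · have eL : (Finset.univ.filter (fun i : Fin (2 ^ k) => (i : ℕ) < m)).filter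
          (fun i => m ≤ ((v i : Fin (2 ^ k)) : ℕ)) = ∅ :=
        Finset.filter_false_of_mem fun i hi =>
          not_le.mpr (h1 i (Finset.mem_filter.mp hi).2)
      have eR : (Finset.univ.filter (fun i : Fin (2 ^ k) => m ≤ (i : ℕ))).filter
          (fun i => ((v i : Fin (2 ^ k)) : ℕ) < m) = ∅ :=
        Finset.filter_false_of_mem fun i hi =>
          not_lt.mpr (h2 i (Finset.mem_filter.mp hi).2)
      rw [eL, eR]
    · have eL : (Finset.univ.filter (fun i : Fin (2 ^ k) => (i : ℕ) < m)).filter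
          (fun i => m ≤ ((v i : Fin (2 ^ k)) : ℕ))
          = Finset.univ.filter (fun i : Fin (2 ^ k) => (i : ℕ) < m) :=
        Finset.filter_true_of_mem fun i hi => h1 i (Finset.mem_filter.mp hi).2
      have eR : (Finset.univ.filter (fun i : Fin (2 ^ k) => m ≤ (i : ℕ))).filter
          (fun i => ((v i : Fin (2 ^ k)) : ℕ) < m)
          = Finset.univ.filter (fun i : Fin (2 ^ k) => m ≤ (i : ℕ)) :=
        Finset.filter_true_of_mem fun i hi => h2 i (Finset.mem_filter.mp hi).2
      rw [eL, eR, card_filter_lt_fin _ _ hmle, card_filter_le_fin _ _ hmle, h2m]
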